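/- arXiv:0801.4114 — 4 statements merged into one kernel-verified Lean document; each statement's English description precedes it below -/
import Mathlib

section
/- For any word Q in simple reflections of a Coxeter group W and any subword P of Q, the Demazure product of P is less than or equal to the Demazure product of Q in Bruhat order. -/
variable {B W : Type*} [DecidableEq B] [Group W] {M : CoxeterMatrix B} (cs : CoxeterSystem M W)

/-- The Bruhat order on a Coxeter group, via the subword property:
`u ≤ v` iff every reduced word for `v` contains a subword that is a reduced word for `u`. -/
def BruhatLe (u v : W) : Prop :=
  ∀ Q : List B, cs.IsReduced Q → cs.wordProd Q = v →
    ∃ P : List B, P.Sublist Q ∧ cs.IsReduced P ∧ cs.wordProd P = u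

/-- The Demazure product of a word in the simple reflections: multiply the letters in
order, omitting any letter that would decrease the length. -/
noncomputable def Dem (Q : List B) : W :=
  Q.foldl (fun w b => if cs.length w < cs.length (w * cs.simple b) then w * cs.simple b else w) 1

/-- The subword of `Q` obtained by deleting the letters at the positions in `F`
(positions are `0`-indexed); this is the complementary subword `Q ∖ F`. -/
def dmask (Q : List B) (F : Finset ℕ) : List B :=
  ((Q.zipIdx.map Prod.swap).filter fun p => p.1 ∉ F).map Prod.snd

/-- The subword of `Q` consisting of the letters at the positions in `F` (in order). -/
def smask (Q : List B) (F : Finset ℕ) : List B :=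
  ((Q.zipIdx.map Prod.swap).filter fun p => p.1 ∈ F).map Prod.snd

/-- `F` is a face of the subword complex `Δ(Q,w)`: `F` is a set of positions of `Q` such
that the complementary subword `Q ∖ F` contains a reduced word for `w`. -/
def IsFace (Q : List B) (w : W) (F : Finset ℕ) : Prop :=
  F ⊆ Finset.range Q.length ∧
    ∃ P : List B, P.Sublist (dmask Q F) ∧ cs.IsReduced P ∧ cs.wordProd P = w

/-- `F` is a facet (maximal face) of the subword complex `Δ(Q,w)`. -/
def IsFacet (Q : List B) (w : W) (F : Finset ℕ) : Prop :=
  IsFace cs Q w F ∧ ∀ F' : Finset ℕ, IsFace cs Q w F' → F ⊆ F' → F' = F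

/-! ### Auxiliary development: strong exchange, deletion, chain order, lifting -/

section Aux

open CoxeterSystem List Relation

open scoped Classical

/-- `g * x * g = y ↔ x = g * y * g` for an involution `g`. -/
private lemma invol_conj_iff {g : W} (hg : g * g = 1) (x y : W) :
    g * x * g = y ↔ x = g * y * g := by
  constructor
  · rintro rfl
    have h : g * (g * x * g) * g = g * g * x * (g * g) := by group
    rw [h, hg, one_mul, mul_one]
  · rintro rfl
    have h : g * (g * y * g) * g = g * g * y * (g * g) := by group
    rw [h, hg, one_mul, mul_one]

private lemma conj_iff (g x y : W) : g * x * g⁻¹ = y ↔ x = g⁻¹ * y * g := by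
  constructor
  · rintro rfl; group
  · rintro rfl; group

private lemma grp1 {G : Type*} [Group G] (x y t : G) (n : ℕ) :
    x ^ n * (x * t * y) * y ^ n = x ^ (n + 1) * t * y ^ (n + 1) := by
  rw [pow_succ x n, pow_succ' y n]
  simp only [mul_assoc]

private lemma grp2 {G : Type*} [Group G] (a b : G) (m k : ℕ) :
    (b * a) ^ k * ((b * a) ^ m * b) * (a * b) ^ k = (b * a) ^ (m + 2 * k) * b := by
  induction k with
  | zero => simp
  | succ k ih =>
    have e1 : (b * a) ^ (k + 1) * ((b * a) ^ m * b) * (a * b) ^ (k + 1)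
        = (b * a) * ((b * a) ^ k * ((b * a) ^ m * b) * (a * b) ^ k) * (a * b) := by
      rw [pow_succ' (b * a) k, pow_succ (a * b) k]
      simp only [mul_assoc]
    rw [e1, ih]
    calc (b * a) * ((b * a) ^ (m + 2 * k) * b) * (a * b)
        = (b * a) * (b * a) ^ (m + 2 * k) * ((b * a) * b) := by simp only [mul_assoc]
      _ = (b * a) ^ (m + 2 * k + 1) * ((b * a) * b) := by rw [← pow_succ']
      _ = (b * a) ^ (m + 2 * k + 1) * (b * a) * b := by rw [← mul_assoc]
      _ = (b * a) ^ (m + 2 * k + 1 + 1) * b := by rw [← pow_succ]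
      _ = (b * a) ^ (m + 2 * (k + 1)) * b := by rw [show m + 2 * (k + 1) = m + 2 * k + 1 + 1 by ring]

private lemma grp2' {G : Type*} [Group G] (a b : G) (k : ℕ) :
    (b * a) ^ k * b * (a * b) ^ k = (b * a) ^ (2 * k) * b := by
  have := grp2 a b 0 k
  simpa using this

private lemma grp2'' {G : Type*} [Group G] (a b : G) (k : ℕ) :
    (b * a) ^ k * (b * a * b) * (a * b) ^ k = (b * a) ^ (2 * k + 1) * b := by
  have := grp2 a b 1 k
  rw [pow_one] at this
  rw [show 2 * k + 1 = 1 + 2 * k by ring]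
  exact this

/-- The sign permutation associated to a simple reflection, acting on `W × ZMod 2`. -/
noncomputable def demPerm (i : B) : Equiv.Perm (W × ZMod 2) :=
  Function.Involutive.toPerm
    (fun p => (cs.simple i * p.1 * cs.simple i,
      p.2 + if p.1 = cs.simple i then 1 else 0))
    (by
      intro p
      refine Prod.ext ?_ ?_
      · show cs.simple i * (cs.simple i * p.1 * cs.simple i) * cs.simple i = p.1
        have h : cs.simple i * (cs.simple i * p.1 * cs.simple i) * cs.simple i
            = cs.simple i * cs.simple i * p.1 * (cs.simple i * cs.simple i) := by group
        rw [h, cs.simple_mul_simple_self, one_mul, mul_one]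
      · show p.2 + (if p.1 = cs.simple i then 1 else 0)
          + (if cs.simple i * p.1 * cs.simple i = cs.simple i then 1 else 0) = p.2
        have hc : (cs.simple i * p.1 * cs.simple i = cs.simple i) ↔ (p.1 = cs.simple i) := by
          rw [invol_conj_iff (cs.simple_mul_simple_self i)]
          rw [show cs.simple i * cs.simple i * cs.simple i = cs.simple i by
            rw [cs.simple_mul_simple_self, one_mul]]
        rw [if_congr hc rfl rfl, add_assoc, CharTwo.add_self_eq_zero, add_zero])

lemma demPerm_apply (i : B) (t : W) (e : ZMod 2) :
    demPerm cs i (t, e) = (cs.simple i * t * cs.simple i,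
      e + if t = cs.simple i then 1 else 0) := rfl

/-- The local sign contribution used in the braid-relation check. -/
noncomputable def demC (i j : B) (x : W) : ZMod 2 :=
  (if x = cs.simple j then 1 else 0)
    + (if x = cs.simple j * cs.simple i * cs.simple j then 1 else 0)

lemma demPerm_mul_apply (i j : B) (t : W) (e : ZMod 2) :
    (demPerm cs i * demPerm cs j) (t, e) =
      ((cs.simple i * cs.simple j) * t * (cs.simple j * cs.simple i), e + demC cs i j t) := by
  rw [Equiv.Perm.mul_apply, demPerm_apply, demPerm_apply]
  refine Prod.ext ?_ ?_
  · show cs.simple i * (cs.simple j * t * cs.simple j) * cs.simple i = _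
    group
  · show e + (if t = cs.simple j then 1 else 0)
      + (if cs.simple j * t * cs.simple j = cs.simple i then 1 else 0) = e + demC cs i j t
    have hc : (cs.simple j * t * cs.simple j = cs.simple i)
        ↔ (t = cs.simple j * cs.simple i * cs.simple j) :=
      invol_conj_iff (cs.simple_mul_simple_self j) t (cs.simple i)
    rw [if_congr hc rfl rfl, demC, add_assoc]

lemma demPerm_mul_pow_apply (i j : B) (n : ℕ) (t : W) (e : ZMod 2) :
    ((demPerm cs i * demPerm cs j) ^ n) (t, e) =
      ((cs.simple i * cs.simple j) ^ n * t * (cs.simple j * cs.simple i) ^ n,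
       e + ∑ k ∈ Finset.range n,
          demC cs i j ((cs.simple i * cs.simple j) ^ k * t * (cs.simple j * cs.simple i) ^ k)) := by
  induction n generalizing t e with
  | zero => simp
  | succ n ih =>
    rw [pow_succ, Equiv.Perm.mul_apply, demPerm_mul_apply, ih]
    refine Prod.ext ?_ ?_
    · show (cs.simple i * cs.simple j) ^ n * (cs.simple i * cs.simple j * t *
        (cs.simple j * cs.simple i)) * (cs.simple j * cs.simple i) ^ n = _
      exact grp1 _ _ _ n
    · show e + demC cs i j t + ∑ k ∈ Finset.range n,
          demC cs i j ((cs.simple i * cs.simple j) ^ k *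
            (cs.simple i * cs.simple j * t * (cs.simple j * cs.simple i)) *
            (cs.simple j * cs.simple i) ^ k) = _
      rw [Finset.sum_range_succ' (fun k => demC cs i j
        ((cs.simple i * cs.simple j) ^ k * t * (cs.simple j * cs.simple i) ^ k)) n]
      have harg : ∀ k : ℕ, (cs.simple i * cs.simple j) ^ k *
            (cs.simple i * cs.simple j * t * (cs.simple j * cs.simple i)) *
            (cs.simple j * cs.simple i) ^ k
          = (cs.simple i * cs.simple j) ^ (k + 1) * t * (cs.simple j * cs.simple i) ^ (k + 1) := by
        intro k
        exact grp1 _ _ _ k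
      rw [Finset.sum_congr rfl fun k _ => congrArg (demC cs i j) (harg k)]
      simp only [pow_zero, one_mul, mul_one]
      ring

private lemma sum_range_two_mul (m : ℕ) (f : ℕ → ZMod 2) :
    ∑ n ∈ Finset.range (2 * m), f n = ∑ k ∈ Finset.range m, (f (2 * k) + f (2 * k + 1)) := by
  induction m with
  | zero => simp
  | succ m ih =>
    have h : 2 * (m + 1) = (2 * m + 1) + 1 := by ring
    rw [h, Finset.sum_range_succ, Finset.sum_range_succ, Finset.sum_range_succ, ih, add_assoc]

lemma demPerm_liftable : M.IsLiftable (demPerm cs) := by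
  intro i j
  apply Equiv.ext
  rintro ⟨t, e⟩
  rw [demPerm_mul_pow_apply]
  have hp : (cs.simple i * cs.simple j) ^ M i j = 1 := cs.simple_mul_simple_pow i j
  have hq : (cs.simple j * cs.simple i) ^ M i j = 1 := cs.simple_mul_simple_pow' i j
  have hterm : ∀ k : ℕ,
      demC cs i j ((cs.simple i * cs.simple j) ^ k * t * (cs.simple j * cs.simple i) ^ k)
        = (if t = (cs.simple j * cs.simple i) ^ (2 * k) * cs.simple j then 1 else 0)
          + (if t = (cs.simple j * cs.simple i) ^ (2 * k + 1) * cs.simple j then 1 else 0) := by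
    intro k
    have hinv : (cs.simple j * cs.simple i) ^ k = ((cs.simple i * cs.simple j) ^ k)⁻¹ := by
      rw [← inv_pow]
      congr 1
      rw [mul_inv_rev, cs.inv_simple, cs.inv_simple]
    have hc1 : ((cs.simple i * cs.simple j) ^ k * t * (cs.simple j * cs.simple i) ^ k
          = cs.simple j)
        ↔ (t = (cs.simple j * cs.simple i) ^ (2 * k) * cs.simple j) := by
      rw [hinv, conj_iff, ← hinv, grp2']
    have hc2 : ((cs.simple i * cs.simple j) ^ k * t * (cs.simple j * cs.simple i) ^ k
          = cs.simple j * cs.simple i * cs.simple j)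
        ↔ (t = (cs.simple j * cs.simple i) ^ (2 * k + 1) * cs.simple j) := by
      rw [hinv, conj_iff, ← hinv, grp2'']
    rw [demC, if_congr hc1 rfl rfl, if_congr hc2 rfl rfl]
  rw [Finset.sum_congr rfl fun k _ => hterm k]
  rw [← sum_range_two_mul (M i j) (fun n =>
    if t = (cs.simple j * cs.simple i) ^ n * cs.simple j then 1 else 0)]
  rw [two_mul, Finset.sum_range_add]
  have hshift : ∀ n : ℕ, (cs.simple j * cs.simple i) ^ (M i j + n) * cs.simple j
      = (cs.simple j * cs.simple i) ^ n * cs.simple j := by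
    intro n
    rw [pow_add, hq, one_mul]
  have hsum2 : ∑ n ∈ Finset.range (M i j),
        (if t = (cs.simple j * cs.simple i) ^ (M i j + n) * cs.simple j then (1 : ZMod 2) else 0)
      = ∑ n ∈ Finset.range (M i j),
        (if t = (cs.simple j * cs.simple i) ^ n * cs.simple j then (1 : ZMod 2) else 0) :=
    Finset.sum_congr rfl (fun n _ => if_congr (by rw [hshift n]) rfl rfl)
  rw [hsum2]
  rw [CharTwo.add_self_eq_zero, add_zero, hp, hq, one_mul, mul_one]
  rfl

/-- The sign representation `W →* Perm (W × ZMod 2)`. -/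
noncomputable def demPhi : W →* Equiv.Perm (W × ZMod 2) :=
  cs.lift ⟨demPerm cs, demPerm_liftable cs⟩

lemma demPhi_simple (i : B) : demPhi cs (cs.simple i) = demPerm cs i := by
  simp [demPhi]

/-- The mod-2 count of occurrences of `t` in the right inversion sequence of `ω`. -/
noncomputable def demN : List B → W → ZMod 2
  | [], _ => 0
  | i :: ω, t =>
      (if (cs.wordProd ω)⁻¹ * cs.simple i * cs.wordProd ω = t then 1 else 0) + demN ω t

lemma demPhi_apply (ω : List B) (t : W) (e : ZMod 2) :
    demPhi cs (cs.wordProd ω) (t, e)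
      = (cs.wordProd ω * t * (cs.wordProd ω)⁻¹, e + demN cs ω t) := by
  induction ω generalizing e with
  | nil => simp [demN]
  | cons i ω ih =>
    rw [cs.wordProd_cons, map_mul, Equiv.Perm.mul_apply, ih, demPhi_simple, demPerm_apply]
    refine Prod.ext ?_ ?_
    · show cs.simple i * (cs.wordProd ω * t * (cs.wordProd ω)⁻¹) * cs.simple i = _
      rw [mul_inv_rev, cs.inv_simple]
      group
    · show e + demN cs ω t
        + (if cs.wordProd ω * t * (cs.wordProd ω)⁻¹ = cs.simple i then 1 else 0)
        = e + demN cs (i :: ω) t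
      have hc : (cs.wordProd ω * t * (cs.wordProd ω)⁻¹ = cs.simple i)
          ↔ ((cs.wordProd ω)⁻¹ * cs.simple i * cs.wordProd ω = t) := by
        rw [conj_iff]
        constructor
        · intro h; rw [h]
        · intro h; rw [h]
      rw [if_congr hc rfl rfl]
      show _ = e + ((if (cs.wordProd ω)⁻¹ * cs.simple i * cs.wordProd ω = t then 1 else 0)
        + demN cs ω t)
      ring

lemma demN_eq_of_wordProd_eq {ω ω' : List B} (h : cs.wordProd ω = cs.wordProd ω') (t : W) :
    demN cs ω t = demN cs ω' t := by
  have h1 := demPhi_apply cs ω t 0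
  have h2 := demPhi_apply cs ω' t 0
  rw [h] at h1
  rw [h1] at h2
  have := congrArg Prod.snd h2
  simpa using this

lemma demN_append (ω ω' : List B) (t : W) :
    demN cs (ω ++ ω') t
      = demN cs ω (cs.wordProd ω' * t * (cs.wordProd ω')⁻¹) + demN cs ω' t := by
  induction ω with
  | nil => simp [demN]
  | cons i ω ih =>
    show (if (cs.wordProd (ω ++ ω'))⁻¹ * cs.simple i * cs.wordProd (ω ++ ω') = t then 1 else 0)
        + demN cs (ω ++ ω') t = _
    rw [ih]
    show _ = ((if (cs.wordProd ω)⁻¹ * cs.simple i * cs.wordProd ω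
          = cs.wordProd ω' * t * (cs.wordProd ω')⁻¹ then 1 else 0)
        + demN cs ω (cs.wordProd ω' * t * (cs.wordProd ω')⁻¹)) + demN cs ω' t
    have hc : ((cs.wordProd (ω ++ ω'))⁻¹ * cs.simple i * cs.wordProd (ω ++ ω') = t)
        ↔ ((cs.wordProd ω)⁻¹ * cs.simple i * cs.wordProd ω
            = cs.wordProd ω' * t * (cs.wordProd ω')⁻¹) := by
      constructor
      · intro h
        rw [← h, cs.wordProd_append]
        group
      · intro h
        rw [cs.wordProd_append, mul_inv_rev]
        have h2 : (cs.wordProd ω)⁻¹ * cs.simple i * cs.wordProd ω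
            = cs.wordProd ω' * t * (cs.wordProd ω')⁻¹ := h
        calc (cs.wordProd ω' )⁻¹ * (cs.wordProd ω)⁻¹ * cs.simple i *
              (cs.wordProd ω * cs.wordProd ω')
            = (cs.wordProd ω')⁻¹ * ((cs.wordProd ω)⁻¹ * cs.simple i * cs.wordProd ω) *
              cs.wordProd ω' := by group
          _ = (cs.wordProd ω')⁻¹ * (cs.wordProd ω' * t * (cs.wordProd ω')⁻¹) *
              cs.wordProd ω' := by rw [h2]
          _ = t := by group
    rw [if_congr hc rfl rfl]
    ring

lemma demN_of_wordProd_reflection {t : W} (ht : cs.IsReflection t)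
    (ω : List B) (hω : cs.wordProd ω = t) : demN cs ω t = 1 := by
  obtain ⟨v, i, htv⟩ := ht
  obtain ⟨γ, hγred, hγ⟩ := cs.exists_reduced_word' v
  have hrev : cs.wordProd γ.reverse = v⁻¹ := by rw [cs.wordProd_reverse, ← hγ]
  have hπ1 : cs.wordProd ([i] ++ γ.reverse) = cs.simple i * v⁻¹ := by
    rw [cs.wordProd_append, cs.wordProd_singleton, hrev]
  have hπα : cs.wordProd (γ ++ ([i] ++ γ.reverse)) = t := by
    rw [cs.wordProd_append, hπ1, ← hγ, htv]
    group
  rw [demN_eq_of_wordProd_eq cs (hω ▸ hπα.symm ▸ rfl : cs.wordProd ω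
    = cs.wordProd (γ ++ ([i] ++ γ.reverse)))]
  rw [demN_append]
  have hconj : cs.wordProd ([i] ++ γ.reverse) * t * (cs.wordProd ([i] ++ γ.reverse))⁻¹
      = cs.simple i := by
    rw [hπ1, htv]
    group
  rw [hconj]
  -- second summand : demN ([i] ++ γ.reverse) t = 1 + demN γ.reverse t
  have hsecond : demN cs ([i] ++ γ.reverse) t = 1 + demN cs γ.reverse t := by
    show (if (cs.wordProd γ.reverse)⁻¹ * cs.simple i * cs.wordProd γ.reverse = t then 1 else 0)
        + demN cs γ.reverse t = 1 + demN cs γ.reverse t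
    have hcond : (cs.wordProd γ.reverse)⁻¹ * cs.simple i * cs.wordProd γ.reverse = t := by
      rw [hrev, htv]
      group
    rw [if_pos hcond]
  rw [hsecond]
  -- demN γ.reverse t = demN γ (simple i)
  have hzero : demN cs γ (cs.simple i) + demN cs γ.reverse t = 0 := by
    have h0 : cs.wordProd (γ ++ γ.reverse) = cs.wordProd [] := by
      rw [cs.wordProd_append, hrev, ← hγ, cs.wordProd_nil, mul_inv_cancel]
    have := demN_eq_of_wordProd_eq cs h0 t
    rw [demN_append] at this
    have hconj2 : cs.wordProd γ.reverse * t * (cs.wordProd γ.reverse)⁻¹ = cs.simple i := by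
      rw [hrev, htv]
      group
    rw [hconj2] at this
    rw [this]
    rfl
  have hrw : demN cs γ.reverse t = demN cs γ (cs.simple i) := by
    have := eq_neg_of_add_eq_zero_right hzero
    rw [this, CharTwo.neg_eq]
  rw [hrw]
  rw [show demN cs γ (cs.simple i) + (1 + demN cs γ (cs.simple i))
    = demN cs γ (cs.simple i) + demN cs γ (cs.simple i) + 1 by ring]
  rw [CharTwo.add_self_eq_zero, zero_add]

lemma mem_rightInvSeq_of_demN_ne_zero (ω : List B) (t : W) (h : demN cs ω t ≠ 0) :
    t ∈ cs.rightInvSeq ω := by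
  induction ω with
  | nil => exact absurd rfl h
  | cons i ω ih =>
    by_cases hc : (cs.wordProd ω)⁻¹ * cs.simple i * cs.wordProd ω = t
    · rw [show cs.rightInvSeq (i :: ω)
        = ((cs.wordProd ω)⁻¹ * cs.simple i * cs.wordProd ω) :: cs.rightInvSeq ω from rfl]
      rw [hc]
      exact List.mem_cons_self
    · have h2 : demN cs (i :: ω) t = demN cs ω t := by
        show (if (cs.wordProd ω)⁻¹ * cs.simple i * cs.wordProd ω = t then 1 else 0)
          + demN cs ω t = demN cs ω t
        rw [if_neg hc, zero_add]
      rw [h2] at h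
      exact List.mem_cons_of_mem _ (ih h)

/-- **Strong exchange property.** -/
theorem dem_strong_exchange {t : W} (ht : cs.IsReflection t) (ω : List B)
    (h : cs.length (cs.wordProd ω * t) < cs.length (cs.wordProd ω)) :
    ∃ k < ω.length, cs.wordProd (ω.eraseIdx k) = cs.wordProd ω * t := by
  obtain ⟨β, hβred, hβ⟩ := cs.exists_reduced_word' (cs.wordProd ω * t)
  have hNβ : demN cs β t = 0 := by
    by_contra hne
    have hmem := mem_rightInvSeq_of_demN_ne_zero cs β t hne
    have hinv := cs.isRightInversion_of_mem_rightInvSeq hβred hmem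
    have h2 : cs.wordProd β * t = cs.wordProd ω := by
      rw [← hβ, mul_assoc, ht.mul_self, mul_one]
    have := hinv.2
    rw [h2, ← hβ] at this
    exact absurd h (lt_asymm this)
  obtain ⟨α, hαred, hα⟩ := cs.exists_reduced_word' t
  have hπ : cs.wordProd ω = cs.wordProd (β ++ α) := by
    rw [cs.wordProd_append, ← hβ, ← hα, mul_assoc, ht.mul_self, mul_one]
  have hN : demN cs ω t = 1 := by
    rw [demN_eq_of_wordProd_eq cs hπ, demN_append]
    have h3 : cs.wordProd α * t * (cs.wordProd α)⁻¹ = t := by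
      rw [← hα]
      group
    rw [h3, hNβ, demN_of_wordProd_reflection cs ht α hα.symm, zero_add]
  have hmem : t ∈ cs.rightInvSeq ω :=
    mem_rightInvSeq_of_demN_ne_zero cs ω t (by rw [hN]; exact one_ne_zero)
  obtain ⟨k, hk, hkt⟩ := List.mem_iff_getElem.mp hmem
  have hk' : k < ω.length := by
    have := cs.length_rightInvSeq ω
    omega
  refine ⟨k, hk', ?_⟩
  rw [← cs.wordProd_mul_getD_rightInvSeq ω k]
  congr 1
  rw [List.getD_eq_getElem _ 1 hk, hkt]

/-- The chain ("Bruhat") order defined by multiplying by reflections that increase length. -/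
def demChainLe (u v : W) : Prop :=
  Relation.ReflTransGen
    (fun a b => ∃ t, cs.IsReflection t ∧ b = a * t ∧ cs.length a < cs.length b) u v

lemma demChainLe_step_up {w : W} {i : B}
    (h : cs.length w < cs.length (w * cs.simple i)) :
    demChainLe cs w (w * cs.simple i) :=
  Relation.ReflTransGen.single ⟨cs.simple i, cs.isReflection_simple i, rfl, h⟩

lemma demChainLe_step_down {w : W} {i : B}
    (h : cs.length (w * cs.simple i) < cs.length w) :
    demChainLe cs (w * cs.simple i) w := by
  have heq : w = w * cs.simple i * cs.simple i := by
    rw [mul_assoc, cs.simple_mul_simple_self, mul_one]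
  exact Relation.ReflTransGen.single ⟨cs.simple i, cs.isReflection_simple i, heq, h⟩

/-- **Deletion property**: every word contains a reduced subword with the same product. -/
theorem dem_exists_reduced_sublist (ω : List B) :
    ∃ P, P.Sublist ω ∧ cs.IsReduced P ∧ cs.wordProd P = cs.wordProd ω := by
  suffices H : ∀ n (ω : List B), ω.length ≤ n →
      ∃ P, P.Sublist ω ∧ cs.IsReduced P ∧ cs.wordProd P = cs.wordProd ω from
    H ω.length ω le_rfl
  intro n
  induction n with
  | zero =>
    intro ω hlen
    rw [List.length_eq_zero_iff.mp (Nat.le_zero.mp hlen)]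
    exact ⟨[], List.Sublist.refl _, by simp [CoxeterSystem.IsReduced], rfl⟩
  | succ n ih =>
    intro ω hlen
    by_cases hred : cs.IsReduced ω
    · exact ⟨ω, List.Sublist.refl _, hred, rfl⟩
    rcases List.eq_nil_or_concat ω with rfl | ⟨ω₀, i, rfl⟩
    · exact absurd (by simp [CoxeterSystem.IsReduced]) hred
    simp only [List.concat_eq_append] at hred hlen ⊢
    have hlen₀ : ω₀.length ≤ n := by
      simp only [List.length_append, List.length_singleton] at hlen
      omega
    by_cases h₀ : cs.IsReduced ω₀
    · have hπ : cs.wordProd (ω₀ ++ [i]) = cs.wordProd ω₀ * cs.simple i := by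
        rw [cs.wordProd_append, cs.wordProd_singleton]
      have hlt : cs.length (cs.wordProd ω₀ * cs.simple i) < cs.length (cs.wordProd ω₀) := by
        rcases cs.length_mul_simple (cs.wordProd ω₀) i with hcase | hcase
        · exfalso
          apply hred
          show cs.length (cs.wordProd (ω₀ ++ [i])) = (ω₀ ++ [i]).length
          rw [hπ, hcase, h₀]
          simp
        · omega
      obtain ⟨k, hk, hkeq⟩ := dem_strong_exchange cs (cs.isReflection_simple i) ω₀ hlt
      have hesub : (ω₀.eraseIdx k).length ≤ n := by
        have := List.length_eraseIdx_add_one hk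
        omega
      obtain ⟨P, hP1, hP2, hP3⟩ := ih (ω₀.eraseIdx k) hesub
      refine ⟨P, ?_, hP2, ?_⟩
      · exact hP1.trans ((List.eraseIdx_sublist ω₀ k).trans (List.sublist_append_left ω₀ [i]))
      · rw [hP3, hkeq, hπ]
    · obtain ⟨P₀, hs, hr, hp⟩ := ih ω₀ hlen₀
      have hP₀len : P₀.length < ω₀.length := by
        have h1 : cs.length (cs.wordProd ω₀) ≤ ω₀.length := cs.length_wordProd_le ω₀
        have h2 : cs.length (cs.wordProd ω₀) ≠ ω₀.length := h₀
        have h3 : P₀.length = cs.length (cs.wordProd ω₀) := by rw [← hp]; exact hr.symm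
        omega
      obtain ⟨P, h1, h2, h3⟩ := ih (P₀ ++ [i]) (by
        simp only [List.length_append, List.length_singleton]
        omega)
      refine ⟨P, ?_, h2, ?_⟩
      · exact h1.trans (List.Sublist.append hs (List.Sublist.refl [i]))
      · rw [h3, cs.wordProd_append, cs.wordProd_append, hp]

/-- Every chain inequality implies the subword property with respect to every reduced word. -/
theorem bruhatLe_of_demChainLe {u v : W} (h : demChainLe cs u v) : BruhatLe cs u v := by
  induction h with
  | refl =>
    intro R hR hπ
    exact ⟨R, List.Sublist.refl R, hR, hπ⟩
  | tail _ hstep ih =>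
    rename_i b c _
    obtain ⟨t, ht, rfl, hlt⟩ := hstep
    intro R hR hπ
    have hlt2 : cs.length (cs.wordProd R * t) < cs.length (cs.wordProd R) := by
      rw [hπ]
      have h2 : b * t * t = b := by rw [mul_assoc, ht.mul_self, mul_one]
      rw [h2]
      exact hlt
    obtain ⟨k, hk, hkeq⟩ := dem_strong_exchange cs ht R hlt2
    have hb : cs.wordProd (R.eraseIdx k) = b := by
      rw [hkeq, hπ, mul_assoc, ht.mul_self, mul_one]
    obtain ⟨Pb, hs, hr, hp⟩ := dem_exists_reduced_sublist cs (R.eraseIdx k)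
    obtain ⟨P, hs', hr', hp'⟩ := ih Pb hr (by rw [hp, hb])
    exact ⟨P, hs'.trans (hs.trans (List.eraseIdx_sublist R k)), hr', hp'⟩

lemma demReflection_conj_simple {t : W} (ht : cs.IsReflection t) (i : B) :
    cs.IsReflection (cs.simple i * t * cs.simple i) := by
  have := ht.conj (cs.simple i)
  rwa [cs.inv_simple] at this

private lemma dem_conj_step {z t : W} (i : B) :
    (z * t) * cs.simple i = (z * cs.simple i) * (cs.simple i * t * cs.simple i) := by
  have h : (z * cs.simple i) * (cs.simple i * t * cs.simple i)
      = z * (cs.simple i * cs.simple i) * t * cs.simple i := by group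
  rw [h, cs.simple_mul_simple_self, mul_one]

/-- **Edge case of the lifting property (Deodhar's property Z).** -/
theorem demZ_edge {z v t : W} (ht : cs.IsReflection t) (hv : v = z * t)
    (hlt : cs.length z < cs.length v) (i : B) :
    demChainLe cs (z * cs.simple i) v ∨ demChainLe cs (z * cs.simple i) (v * cs.simple i) := by
  rcases cs.length_mul_simple z i with hz | hz
  case inr =>
    -- descent of z
    left
    exact (demChainLe_step_down cs (by omega)).trans
      (Relation.ReflTransGen.single ⟨t, ht, hv, hlt⟩)
  case inl =>
    by_cases hzv : z * cs.simple i = v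
    · left
      rw [hzv]
      exact Relation.ReflTransGen.refl
    have hedge : v * cs.simple i = (z * cs.simple i) * (cs.simple i * t * cs.simple i) := by
      rw [hv]; exact dem_conj_step cs i
    rcases cs.length_mul_simple v i with hv2 | hv2
    · -- ascent of v
      right
      refine Relation.ReflTransGen.single
        ⟨cs.simple i * t * cs.simple i, demReflection_conj_simple cs ht i, hedge, ?_⟩
      omega
    · -- descent of v
      rcases lt_trichotomy (cs.length (z * cs.simple i)) (cs.length (v * cs.simple i))
        with h3 | h3 | h3
      · right
        exact Relation.ReflTransGen.single
          ⟨cs.simple i * t * cs.simple i, demReflection_conj_simple cs ht i, hedge, h3⟩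
      · exfalso
        have := (demReflection_conj_simple cs ht i).length_mul_left_ne (z * cs.simple i)
        rw [← hedge] at this
        exact this h3.symm
      · -- the hard case: show z * simple i = v, contradiction with hzv
        exfalso
        have h4 : cs.length z + 1 = cs.length v := by omega
        obtain ⟨S, hSred, hSeq⟩ := cs.exists_reduced_word' (v * cs.simple i)
        have hπR : cs.wordProd (S ++ [i]) = v := by
          rw [cs.wordProd_append, cs.wordProd_singleton, ← hSeq, mul_assoc,
            cs.simple_mul_simple_self, mul_one]
        have hlen2 : cs.length (cs.wordProd (S ++ [i]) * t) <
            cs.length (cs.wordProd (S ++ [i])) := by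
          rw [hπR]
          have : v * t = z := by rw [hv, mul_assoc, ht.mul_self, mul_one]
          rw [this]
          exact hlt
        obtain ⟨k, hk, hkeq⟩ := dem_strong_exchange cs ht (S ++ [i]) hlen2
        have hz2 : cs.wordProd ((S ++ [i]).eraseIdx k) = z := by
          rw [hkeq, hπR, hv, mul_assoc, ht.mul_self, mul_one]
        have hSlen : S.length + 1 = cs.length v := by
          have : cs.length (cs.wordProd S) = S.length := hSred
          rw [← hSeq] at this
          omega
        rcases Nat.lt_or_ge k S.length with hkS | hkS
        · rw [List.eraseIdx_append_of_lt_length hkS] at hz2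
          have hz3 : z * cs.simple i = cs.wordProd (S.eraseIdx k) := by
            rw [← hz2, cs.wordProd_append, cs.wordProd_singleton, mul_assoc,
              cs.simple_mul_simple_self, mul_one]
          have hle : cs.length (z * cs.simple i) ≤ (S.eraseIdx k).length := by
            rw [hz3]
            exact cs.length_wordProd_le _
          have := List.length_eraseIdx_add_one hkS
          omega
        · have hkeq2 : k = S.length := by
            rw [List.length_append, List.length_singleton] at hk
            omega
          have hS : (S ++ [i]).eraseIdx k = S := by
            rw [hkeq2, List.eraseIdx_eq_take_drop_succ]
            simp
          rw [hS] at hz2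
          apply hzv
          rw [← hz2, ← hSeq, mul_assoc, cs.simple_mul_simple_self, mul_one]

/-- **Lifting property (Deodhar's property Z).** -/
theorem demZ {u v : W} (h : demChainLe cs u v) (i : B) :
    demChainLe cs (u * cs.simple i) v ∨
      demChainLe cs (u * cs.simple i) (v * cs.simple i) := by
  induction h with
  | refl => right; exact Relation.ReflTransGen.refl
  | tail _ hstep ih =>
    obtain ⟨t, ht, rfl, hlt⟩ := hstep
    rcases ih with h' | h'
    · left
      exact h'.trans (Relation.ReflTransGen.single ⟨t, ht, rfl, hlt⟩)
    · rcases demZ_edge cs ht rfl hlt i with h'' | h''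
      · left; exact h'.trans h''
      · right; exact h'.trans h''

lemma dem_concat (ω : List B) (i : B) :
    Dem cs (ω ++ [i]) =
      if cs.length (Dem cs ω) < cs.length (Dem cs ω * cs.simple i)
      then Dem cs ω * cs.simple i else Dem cs ω := by
  simp [Dem, List.foldl_append]
  rfl

lemma demChainLe_dem_concat (ω : List B) (i : B) :
    demChainLe cs (Dem cs ω) (Dem cs (ω ++ [i])) := by
  rw [dem_concat]
  split_ifs with h
  · exact demChainLe_step_up cs h
  · exact Relation.ReflTransGen.refl

theorem demChainLe_dem_mono (Q : List B) :
    ∀ P : List B, P.Sublist Q → demChainLe cs (Dem cs P) (Dem cs Q) := by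
  induction Q using List.reverseRecOn with
  | nil =>
    intro P h
    rw [List.sublist_nil.mp h]
    exact Relation.ReflTransGen.refl
  | append_singleton Q₀ i ih =>
    intro P h
    have h' : P.reverse.Sublist (i :: Q₀.reverse) := by
      have := h.reverse
      simpa using this
    rcases List.sublist_cons_iff.mp h' with hc | ⟨r, hr1, hr2⟩
    · have hPQ : P.Sublist Q₀ := by simpa using hc.reverse
      exact (ih P hPQ).trans (demChainLe_dem_concat cs Q₀ i)
    · have hP : P = r.reverse ++ [i] := by
        rw [← List.reverse_reverse P, hr1]
        simp
      have hsub : r.reverse.Sublist Q₀ := by simpa using hr2.reverse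
      have hu := ih r.reverse hsub
      rw [hP, dem_concat, dem_concat]
      split_ifs with h1 h2
      · rcases demZ cs hu i with h' | h'
        · exact h'.trans (demChainLe_step_up cs h2)
        · exact h'
      · rcases demZ cs hu i with h' | h'
        · exact h'
        · have hdown : cs.length (Dem cs Q₀ * cs.simple i) < cs.length (Dem cs Q₀) := by
            rcases cs.length_mul_simple (Dem cs Q₀) i with hh | hh <;> omega
          exact h'.trans (demChainLe_step_down cs hdown)
      · next h2 =>
        exact hu.trans (demChainLe_step_up cs h2)
      · exact hu

end Aux

/-- The Demazure product is monotone with respect to taking subwords: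
if `P` is a subword of `Q` then `Dem P ≤ Dem Q` in Bruhat order. -/
theorem dem_mono_sublist (P Q : List B) (h : P.Sublist Q) :
    BruhatLe cs (Dem cs P) (Dem cs Q) :=
  bruhatLe_of_demChainLe cs (demChainLe_dem_mono cs Q P h)
end

section
/- For a word Q in simple reflections of a Coxeter group and an element w, the Demazure product of Q equals the maximum, in Bruhat order, of the products of all reduced subwords of Q; in particular Q contains a subword that is a reduced word for w if and only if w ≤ Dem(Q) in Bruhat order. -/
variable {B W : Type*} [DecidableEq B] [Group W] {M : CoxeterMatrix B} (cs : CoxeterSystem M W)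

/-! ### Auxiliary development: the sign representation, strong exchange, and the
Bruhat order via reflection chains. -/

open List

namespace CoxAux

open Classical

set_option linter.unusedSectionVars false

/-! #### List facts -/

lemma sublist_concat_cases {α : Type*} {P T : List α} {i : α} (h : P.Sublist (T ++ [i])) :
    P.Sublist T ∨ ∃ P₀, P = P₀ ++ [i] ∧ P₀.Sublist T := by
  have h' := h.reverse
  rw [List.reverse_append] at h'
  simp only [List.reverse_cons, List.reverse_nil, List.nil_append, List.singleton_append] at h'
  rcases List.sublist_cons_iff.mp h' with h'' | ⟨r, hr, hrs⟩
  · left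
    exact List.reverse_sublist.mp h''
  · right
    refine ⟨r.reverse, ?_, ?_⟩
    · have : P.reverse.reverse = (i :: r).reverse := by rw [hr]
      simpa using this
    · have := hrs.reverse
      rwa [List.reverse_reverse] at this

/-! #### The sign (Tits) representation on `W × ℤˣ` -/

/-- Generators of the Tits sign representation on `W × ℤˣ`. -/
noncomputable def sgnGen (i : B) : Function.End (W × ℤˣ) :=
  fun x => (cs.simple i * x.1 * cs.simple i,
    x.2 * if x.1 = cs.simple i then (-1 : ℤˣ) else 1)

lemma conj_pow_aux (i j : B) (a : ℕ) :
    (cs.simple j * cs.simple i) ^ a * cs.simple j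
      = cs.simple j * (cs.simple i * cs.simple j) ^ a := by
  induction a with
  | zero => simp
  | succ a ih =>
    rw [pow_succ' (cs.simple j * cs.simple i), pow_succ' (cs.simple i * cs.simple j),
      mul_assoc, ih]
    simp [mul_assoc]

lemma inv_pow_aux (i j : B) (a : ℕ) :
    ((cs.simple i * cs.simple j) ^ a)⁻¹ = (cs.simple j * cs.simple i) ^ a := by
  rw [← inv_pow, mul_inv_rev, cs.inv_simple, cs.inv_simple]

lemma conj_eq_iff (u v x y : W) : u * x * v = y ↔ x = u⁻¹ * y * v⁻¹ := by
  constructor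
  · intro h; rw [← h]; group
  · intro h; rw [h]; group

lemma key1 (i j : B) (a : ℕ) :
    (cs.simple j * cs.simple i) ^ a * cs.simple j * (cs.simple i * cs.simple j) ^ a
      = cs.simple j * (cs.simple i * cs.simple j) ^ (2 * a) := by
  rw [conj_pow_aux, mul_assoc, ← pow_add, two_mul]

lemma key2 (i j : B) (a : ℕ) :
    (cs.simple j * cs.simple i) ^ a * (cs.simple j * cs.simple i * cs.simple j)
        * (cs.simple i * cs.simple j) ^ a
      = cs.simple j * (cs.simple i * cs.simple j) ^ (2 * a + 1) := by
  have h : (cs.simple j * cs.simple i) ^ a * (cs.simple j * cs.simple i * cs.simple j)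
      = (cs.simple j * cs.simple i) ^ (a + 1) * cs.simple j := by
    rw [pow_succ]; simp [mul_assoc]
  rw [h, conj_pow_aux, mul_assoc, ← pow_add, show a + 1 + a = 2 * a + 1 from by omega]

lemma sgnGen_pow_aux (i j : B) (a : ℕ) (x : W × ℤˣ) :
    ((sgnGen cs i * sgnGen cs j) ^ a) x =
      ((cs.simple i * cs.simple j) ^ a * x.1 * (cs.simple j * cs.simple i) ^ a,
       x.2 * ∏ r ∈ Finset.range (2 * a),
         (if x.1 = cs.simple j * (cs.simple i * cs.simple j) ^ r then (-1 : ℤˣ) else 1)) := by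
  induction a with
  | zero =>
    rw [pow_zero]
    show x = _
    simp
  | succ a ih =>
    have happ : ((sgnGen cs i * sgnGen cs j) ^ (a + 1)) x
        = (sgnGen cs i) ((sgnGen cs j) (((sgnGen cs i * sgnGen cs j) ^ a) x)) := by
      rw [pow_succ' (sgnGen cs i * sgnGen cs j)]
      rfl
    rw [happ, ih]
    have e : (sgnGen cs i) ((sgnGen cs j)
          ((cs.simple i * cs.simple j) ^ a * x.1 * (cs.simple j * cs.simple i) ^ a,
           x.2 * ∏ r ∈ Finset.range (2 * a),
             (if x.1 = cs.simple j * (cs.simple i * cs.simple j) ^ r then (-1 : ℤˣ) else 1)))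
        = (cs.simple i * (cs.simple j * ((cs.simple i * cs.simple j) ^ a * x.1
              * (cs.simple j * cs.simple i) ^ a) * cs.simple j) * cs.simple i,
           (x.2 * ∏ r ∈ Finset.range (2 * a),
             (if x.1 = cs.simple j * (cs.simple i * cs.simple j) ^ r then (-1 : ℤˣ) else 1))
           * (if (cs.simple i * cs.simple j) ^ a * x.1 * (cs.simple j * cs.simple i) ^ a
                = cs.simple j then (-1 : ℤˣ) else 1)
           * (if cs.simple j * ((cs.simple i * cs.simple j) ^ a * x.1
                * (cs.simple j * cs.simple i) ^ a) * cs.simple j = cs.simple i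
              then (-1 : ℤˣ) else 1)) := rfl
    rw [e]
    have c1 : ((cs.simple i * cs.simple j) ^ a * x.1 * (cs.simple j * cs.simple i) ^ a
          = cs.simple j)
        ↔ (x.1 = cs.simple j * (cs.simple i * cs.simple j) ^ (2 * a)) := by
      rw [conj_eq_iff, inv_pow_aux cs i j, inv_pow_aux cs j i, key1]
    have c2 : (cs.simple j * ((cs.simple i * cs.simple j) ^ a * x.1
            * (cs.simple j * cs.simple i) ^ a) * cs.simple j = cs.simple i)
        ↔ (x.1 = cs.simple j * (cs.simple i * cs.simple j) ^ (2 * a + 1)) := by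
      rw [conj_eq_iff (cs.simple j) (cs.simple j), cs.inv_simple]
      rw [conj_eq_iff, inv_pow_aux cs i j, inv_pow_aux cs j i, key2]
    rw [Prod.ext_iff]
    constructor
    · show cs.simple i * (cs.simple j * ((cs.simple i * cs.simple j) ^ a * x.1
          * (cs.simple j * cs.simple i) ^ a) * cs.simple j) * cs.simple i = _
      rw [pow_succ' (cs.simple i * cs.simple j), pow_succ (cs.simple j * cs.simple i)]
      simp [mul_assoc]
    · show _ = x.2 * ∏ r ∈ Finset.range (2 * (a + 1)),
        (if x.1 = cs.simple j * (cs.simple i * cs.simple j) ^ r then (-1 : ℤˣ) else 1)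
      rw [if_congr c1 rfl rfl, if_congr c2 rfl rfl,
        show 2 * (a + 1) = (2 * a) + 1 + 1 from by ring,
        Finset.prod_range_succ, Finset.prod_range_succ, mul_assoc x.2, mul_assoc x.2]

lemma sgnGen_liftable : M.IsLiftable (sgnGen cs) := by
  intro i j
  funext x
  show ((sgnGen cs i * sgnGen cs j) ^ M i j) x = x
  rw [sgnGen_pow_aux]
  have h1 : (cs.simple i * cs.simple j) ^ M i j = 1 := cs.simple_mul_simple_pow i j
  have h2 : (cs.simple j * cs.simple i) ^ M i j = 1 := cs.simple_mul_simple_pow' i j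
  rw [h1, h2, two_mul, Finset.prod_range_add]
  have hper : ∀ r, (if x.1 = cs.simple j * (cs.simple i * cs.simple j) ^ (M i j + r)
        then (-1 : ℤˣ) else 1)
      = (if x.1 = cs.simple j * (cs.simple i * cs.simple j) ^ r then (-1 : ℤˣ) else 1) := by
    intro r
    rw [pow_add, h1, one_mul]
  simp only [hper]
  rw [Int.units_mul_self]
  simp

/-- The Tits sign representation. -/
noncomputable def eta : W →* Function.End (W × ℤˣ) :=
  cs.lift ⟨sgnGen cs, sgnGen_liftable cs⟩

lemma eta_simple (i : B) : eta cs (cs.simple i) = sgnGen cs i :=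
  cs.lift_apply_simple (sgnGen_liftable cs) i

lemma eta_wordProd (ω : List B) (x : W × ℤˣ) :
    eta cs (cs.wordProd ω) x =
      (cs.wordProd ω * x.1 * (cs.wordProd ω)⁻¹,
       x.2 * ((cs.rightInvSeq ω).map
         (fun t => if x.1 = t then (-1 : ℤˣ) else 1)).prod) := by
  induction ω generalizing x with
  | nil =>
    rw [cs.wordProd_nil, map_one]
    show x = _
    simp
  | cons i ω ih =>
    rw [cs.wordProd_cons, map_mul]
    have happ : (eta cs (cs.simple i) * eta cs (cs.wordProd ω)) x
        = (eta cs (cs.simple i)) ((eta cs (cs.wordProd ω)) x) := rfl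
    rw [happ, ih, eta_simple]
    have e : sgnGen cs i
          (cs.wordProd ω * x.1 * (cs.wordProd ω)⁻¹,
           x.2 * ((cs.rightInvSeq ω).map
             (fun t => if x.1 = t then (-1 : ℤˣ) else 1)).prod)
        = (cs.simple i * (cs.wordProd ω * x.1 * (cs.wordProd ω)⁻¹) * cs.simple i,
           (x.2 * ((cs.rightInvSeq ω).map
             (fun t => if x.1 = t then (-1 : ℤˣ) else 1)).prod)
           * (if cs.wordProd ω * x.1 * (cs.wordProd ω)⁻¹ = cs.simple i
              then (-1 : ℤˣ) else 1)) := rfl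
    rw [e]
    have hris : cs.rightInvSeq (i :: ω)
        = ((cs.wordProd ω)⁻¹ * cs.simple i * cs.wordProd ω) :: cs.rightInvSeq ω := rfl
    have c1 : (cs.wordProd ω * x.1 * (cs.wordProd ω)⁻¹ = cs.simple i)
        ↔ (x.1 = (cs.wordProd ω)⁻¹ * cs.simple i * cs.wordProd ω) := by
      rw [conj_eq_iff, inv_inv]
    rw [Prod.ext_iff]
    constructor
    · show cs.simple i * (cs.wordProd ω * x.1 * (cs.wordProd ω)⁻¹) * cs.simple i
        = cs.simple i * cs.wordProd ω * x.1 * (cs.simple i * cs.wordProd ω)⁻¹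
      rw [mul_inv_rev, cs.inv_simple]
      simp [mul_assoc]
    · show _ = x.2 * ((cs.rightInvSeq (i :: ω)).map
        (fun t => if x.1 = t then (-1 : ℤˣ) else 1)).prod
      rw [if_congr c1 rfl rfl, hris, List.map_cons, List.prod_cons]
      simp [mul_assoc, mul_comm, mul_left_comm]

/-- The sign of `t` in `w`, i.e. the cocycle of the sign representation. -/
noncomputable def sgn (w t : W) : ℤˣ := (eta cs w (t, 1)).2

lemma sgn_eq_prod (ω : List B) (t : W) :
    sgn cs (cs.wordProd ω) t
      = ((cs.rightInvSeq ω).map (fun u => if t = u then (-1 : ℤˣ) else 1)).prod := by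
  rw [sgn, eta_wordProd]
  simp

lemma mem_of_sgn_neg_one {ω : List B} {t : W} (h : sgn cs (cs.wordProd ω) t = -1) :
    t ∈ cs.rightInvSeq ω := by
  by_contra hmem
  have hone : ((cs.rightInvSeq ω).map (fun u => if t = u then (-1 : ℤˣ) else 1)).prod = 1 := by
    apply List.prod_eq_one
    intro y hy
    obtain ⟨u, hu, rfl⟩ := List.mem_map.mp hy
    exact if_neg (by rintro rfl; exact hmem hu)
  rw [sgn_eq_prod, hone] at h
  exact absurd h (by decide)

lemma eta_apply (w t : W) (e : ℤˣ) :
    eta cs w (t, e) = (w * t * w⁻¹, e * sgn cs w t) := by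
  obtain ⟨ω, rfl⟩ := cs.wordProd_surjective w
  rw [eta_wordProd, sgn, eta_wordProd]
  simp

lemma sgn_mul (w w' t : W) :
    sgn cs (w * w') t = sgn cs w' t * sgn cs w (w' * t * w'⁻¹) := by
  have h : eta cs (w * w') (t, 1) = eta cs w (eta cs w' (t, 1)) := by
    rw [map_mul]; rfl
  rw [eta_apply, eta_apply, eta_apply] at h
  have := congrArg Prod.snd h
  simpa using this

lemma sgn_one (t : W) : sgn cs 1 t = 1 := by
  rw [sgn, map_one]
  rfl

lemma sgn_simple_self (i : B) : sgn cs (cs.simple i) (cs.simple i) = -1 := by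
  rw [sgn, eta_simple]
  simp [sgnGen]

lemma sgn_refl_self {t : W} (ht : cs.IsReflection t) : sgn cs t t = -1 := by
  obtain ⟨u, i, rfl⟩ := ht
  set t := u * cs.simple i * u⁻¹ with hts
  have h1 : t = (u * cs.simple i) * u⁻¹ := by rw [hts, mul_assoc]
  have h2 : sgn cs t t = sgn cs u⁻¹ t * sgn cs (u * cs.simple i) (u⁻¹ * t * u⁻¹⁻¹) := by
    rw [h1, sgn_mul]
  have h3 : u⁻¹ * t * u⁻¹⁻¹ = cs.simple i := by
    rw [hts]; group
  rw [h3] at h2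
  have h4 : sgn cs (u * cs.simple i) (cs.simple i)
      = sgn cs (cs.simple i) (cs.simple i)
        * sgn cs u (cs.simple i * cs.simple i * (cs.simple i)⁻¹) := by
    rw [sgn_mul]
  have h5 : cs.simple i * cs.simple i * (cs.simple i)⁻¹ = cs.simple i := by
    rw [cs.inv_simple, cs.simple_mul_simple_cancel_right]
  rw [h5, sgn_simple_self] at h4
  have h6 : sgn cs u (cs.simple i) * sgn cs u⁻¹ (u * cs.simple i * u⁻¹) = 1 := by
    have h : sgn cs (u⁻¹ * u) (cs.simple i)
        = sgn cs u (cs.simple i) * sgn cs u⁻¹ (u * cs.simple i * u⁻¹) := by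
      rw [sgn_mul]
    rw [inv_mul_cancel, sgn_one] at h
    exact h.symm
  have h7 : sgn cs u⁻¹ t * sgn cs u (cs.simple i) = 1 := by
    rw [mul_comm]
    exact h6
  rw [h2, h4]
  calc sgn cs u⁻¹ t * (-1 * sgn cs u (cs.simple i))
      = -(sgn cs u⁻¹ t * sgn cs u (cs.simple i)) := by
        rw [neg_one_mul, mul_neg]
    _ = -1 := by rw [h7]

lemma sgn_neg_one_of_descent {w t : W} (ht : cs.IsReflection t)
    (hl : cs.length (w * t) < cs.length w) : sgn cs w t = -1 := by
  rcases Int.units_eq_one_or (sgn cs w t) with h | h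
  · exfalso
    have h1 : sgn cs (w * t) t = -1 := by
      rw [sgn_mul]
      have htt : t * t * t⁻¹ = t := by
        rw [ht.mul_self, one_mul, ht.inv]
      rw [htt, sgn_refl_self cs ht, h, mul_one]
    obtain ⟨ω, hred, hprod⟩ := cs.exists_reduced_word' (w * t)
    rw [hprod] at h1
    have h4 : t ∈ cs.rightInvSeq ω := mem_of_sgn_neg_one cs h1
    have h5 := (cs.isRightInversion_of_mem_rightInvSeq hred h4).2
    rw [← hprod] at h5
    have hw : w * t * t = w := by rw [mul_assoc, ht.mul_self, mul_one]
    rw [hw] at h5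
    omega
  · exact h

lemma strong_exchange (ω : List B) {t : W} (ht : cs.IsReflection t)
    (hl : cs.length (cs.wordProd ω * t) < cs.length (cs.wordProd ω)) :
    ∃ j < ω.length, cs.wordProd (ω.eraseIdx j) = cs.wordProd ω * t := by
  have hsgn : sgn cs (cs.wordProd ω) t = -1 := sgn_neg_one_of_descent cs ht hl
  have h4 : t ∈ cs.rightInvSeq ω := mem_of_sgn_neg_one cs hsgn
  obtain ⟨j, hj, hjt⟩ := List.mem_iff_getElem.mp h4
  rw [cs.length_rightInvSeq] at hj
  refine ⟨j, hj, ?_⟩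
  rw [← cs.wordProd_mul_getD_rightInvSeq ω j]
  congr 1
  rw [List.getD_eq_getElem _ _ (by rw [cs.length_rightInvSeq]; exact hj)]
  exact hjt

/-! #### Length facts -/

lemma length_simple_asc {w : W} {i : B} (h : cs.length w < cs.length (w * cs.simple i)) :
    cs.length (w * cs.simple i) = cs.length w + 1 := by
  rcases cs.length_mul_simple w i with h' | h' <;> omega

lemma length_simple_desc {w : W} {i : B} (h : cs.length (w * cs.simple i) < cs.length w) :
    cs.length (w * cs.simple i) + 1 = cs.length w := by
  rcases cs.length_mul_simple w i with h' | h' <;> omega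

lemma length_simple_lt_of_not_lt {w : W} {i : B}
    (h : ¬ cs.length (w * cs.simple i) < cs.length w) :
    cs.length w < cs.length (w * cs.simple i) := by
  have := cs.length_mul_simple_ne w i
  omega

lemma length_simple_le (w : W) (i : B) :
    cs.length (w * cs.simple i) ≤ cs.length w + 1 := by
  rcases cs.length_mul_simple w i with h' | h' <;> omega

/-! #### Reduced words -/

lemma isReduced_nil : cs.IsReduced ([] : List B) := by
  simp [CoxeterSystem.IsReduced]

lemma isReduced_concat_left {P : List B} {i : B} (h : cs.IsReduced (P ++ [i])) :
    cs.IsReduced P := by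
  have := h.take P.length
  rwa [List.take_left] at this

lemma wordProd_concat' (P : List B) (i : B) :
    cs.wordProd (P ++ [i]) = cs.wordProd P * cs.simple i := by
  rw [cs.wordProd_append, cs.wordProd_singleton]

lemma isReduced_concat {P : List B} {i : B} (hP : cs.IsReduced P)
    (h : cs.length (cs.wordProd P) < cs.length (cs.wordProd P * cs.simple i)) :
    cs.IsReduced (P ++ [i]) := by
  have : cs.length (cs.wordProd (P ++ [i])) = (P ++ [i]).length := by
    rw [wordProd_concat' cs, List.length_append, length_simple_asc cs h, hP]
    simp
  exact this

lemma isReduced_length {P : List B} (h : cs.IsReduced P) :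
    cs.length (cs.wordProd P) = P.length := h

/-- Deletion property: every word contains a reduced subword with the same product. -/
lemma deletion (Q : List B) :
    ∃ P, P.Sublist Q ∧ cs.IsReduced P ∧ cs.wordProd P = cs.wordProd Q := by
  induction Q using List.reverseRecOn with
  | nil => exact ⟨[], List.Sublist.refl _, isReduced_nil cs, rfl⟩
  | append_singleton Q i ih =>
    obtain ⟨P, hsub, hred, hprod⟩ := ih
    by_cases h : cs.length (cs.wordProd Q) < cs.length (cs.wordProd Q * cs.simple i)
    · refine ⟨P ++ [i], (List.append_sublist_append_right [i]).mpr hsub, ?_, ?_⟩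
      · exact isReduced_concat cs hred (by rw [hprod]; exact h)
      · rw [wordProd_concat' cs, wordProd_concat' cs, hprod]
    · have h' : cs.length (cs.wordProd P * cs.simple i) < cs.length (cs.wordProd P) := by
        rw [hprod]
        have := cs.length_mul_simple_ne (cs.wordProd Q) i
        omega
      obtain ⟨j, hj, hje⟩ := strong_exchange cs P (cs.isReflection_simple i) h'
      refine ⟨P.eraseIdx j, ?_, ?_, ?_⟩
      · exact ((P.eraseIdx_sublist j).trans hsub).trans (List.sublist_append_of_sublist_left
          (List.Sublist.refl Q))
      · have e1 : cs.length (cs.wordProd (P.eraseIdx j)) = (P.eraseIdx j).length := by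
          rw [hje, List.length_eraseIdx, if_pos hj]
          have h1 : cs.length (cs.wordProd P * cs.simple i) + 1 = cs.length (cs.wordProd P) :=
            length_simple_desc cs h'
          have h2 : cs.length (cs.wordProd P) = P.length := hred
          omega
        exact e1
      · rw [hje, wordProd_concat' cs, hprod]

/-! #### The Bruhat order via reflection chains -/

/-- Chain version of Bruhat order: `u ≤ v` iff `u` is obtained from `v` by repeatedly
multiplying by reflections which decrease the length. -/
inductive Bru (cs' : CoxeterSystem M W) : W → W → Prop
  | refl (v : W) : Bru cs' v v
  | step {u v : W} (t : W) (ht : cs'.IsReflection t)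
      (hl : cs'.length (v * t) < cs'.length v) (hb : Bru cs' u (v * t)) : Bru cs' u v

lemma Bru.trans' {a b c : W} (h1 : Bru cs a b) (h2 : Bru cs b c) : Bru cs a c := by
  induction h2 with
  | refl => exact h1
  | step t ht hl hb ih => exact Bru.step t ht hl ih

lemma bru_of_lt {v t : W} (ht : cs.IsReflection t) (hl : cs.length (v * t) < cs.length v) :
    Bru cs (v * t) v :=
  Bru.step t ht hl (Bru.refl _)

lemma bru_mul_simple_of_lt {v : W} {i : B}
    (hl : cs.length v < cs.length (v * cs.simple i)) :
    Bru cs v (v * cs.simple i) := by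
  have hc : (v * cs.simple i) * cs.simple i = v := cs.simple_mul_simple_cancel_right i
  have h := bru_of_lt cs (cs.isReflection_simple i) (v := v * cs.simple i)
    (by rw [hc]; exact hl)
  rwa [hc] at h

/-- Subword property, easy direction: if `u ≤ v` in the chain order, then every reduced
word for `v` contains a reduced subword for `u`. -/
lemma bru_subword {u v : W} (h : Bru cs u v) :
    ∀ R : List B, cs.IsReduced R → cs.wordProd R = v →
      ∃ P, P.Sublist R ∧ cs.IsReduced P ∧ cs.wordProd P = u := by
  induction h with
  | refl =>
    intro R hR hRv
    exact ⟨R, List.Sublist.refl _, hR, hRv⟩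
  | step t ht hl hb ih =>
    intro R hR hRv
    have hl' : cs.length (cs.wordProd R * t) < cs.length (cs.wordProd R) := by
      rw [hRv]; exact hl
    obtain ⟨j, hj, hje⟩ := strong_exchange cs R ht hl'
    obtain ⟨R'', h1, h2, h3⟩ := deletion cs (R.eraseIdx j)
    have h3' : cs.wordProd R'' = cs.wordProd R * t := by rw [h3, hje]
    rw [hRv] at h3'
    obtain ⟨P, hP1, hP2, hP3⟩ := ih R'' h2 h3'
    exact ⟨P, (hP1.trans h1).trans (R.eraseIdx_sublist j), hP2, hP3⟩

/-- `S` statement of the mutual induction: subwords of reduced words are Bruhat-below. -/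
def Sst (n : ℕ) : Prop :=
  ∀ R : List B, R.length ≤ n → cs.IsReduced R →
    ∀ P : List B, P.Sublist R → cs.IsReduced P → Bru cs (cs.wordProd P) (cs.wordProd R)

/-- `K` statement of the mutual induction: the lifting property for the chain order. -/
def Kst (n : ℕ) : Prop :=
  ∀ v : W, cs.length v ≤ n → ∀ u : W, ∀ i : B, Bru cs u v →
    (cs.length (v * cs.simple i) < cs.length v → Bru cs (u * cs.simple i) v) ∧
    (cs.length v < cs.length (v * cs.simple i) →
      Bru cs (u * cs.simple i) (v * cs.simple i))

lemma SK : ∀ n : ℕ, Sst cs n ∧ Kst cs n := by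
  intro n
  induction n using Nat.strong_induction_on with
  | _ n ih =>
  have hS : Sst cs n := by
    intro R hRn hRred P hPR hPred
    rcases List.eq_nil_or_concat R with rfl | ⟨R₀, i, rfl⟩
    · rw [List.sublist_nil.mp hPR]
      exact Bru.refl _
    · rw [List.concat_eq_append] at hRn hRred hPR ⊢
      have hm : R₀.length < n := by
        rw [List.length_append] at hRn
        simp at hRn
        omega
      have hR₀red : cs.IsReduced R₀ := isReduced_concat_left cs hRred
      have hlR : cs.length (cs.wordProd (R₀ ++ [i])) = R₀.length + 1 := by
        rw [isReduced_length cs hRred, List.length_append]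
        simp
      have hlR₀ : cs.length (cs.wordProd R₀) = R₀.length := hR₀red
      have hbRR₀ : Bru cs (cs.wordProd R₀) (cs.wordProd (R₀ ++ [i])) := by
        have hc : cs.wordProd (R₀ ++ [i]) * cs.simple i = cs.wordProd R₀ := by
          rw [wordProd_concat' cs, cs.simple_mul_simple_cancel_right]
        have h := bru_of_lt cs (cs.isReflection_simple i)
          (v := cs.wordProd (R₀ ++ [i])) (t := cs.simple i)
          (by rw [hc, hlR, hlR₀]; omega)
        rwa [hc] at h
      rcases sublist_concat_cases hPR with hP | ⟨P₀, rfl, hP₀⟩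
      · exact ((ih R₀.length hm).1 R₀ le_rfl hR₀red P hP hPred).trans' cs hbRR₀
      · have hP₀red : cs.IsReduced P₀ := isReduced_concat_left cs hPred
        have hb : Bru cs (cs.wordProd P₀) (cs.wordProd R₀) :=
          (ih R₀.length hm).1 R₀ le_rfl hR₀red P₀ hP₀ hP₀red
        have hK := ((ih R₀.length hm).2 (cs.wordProd R₀) (le_of_eq hlR₀)
          (cs.wordProd P₀) i hb).2
        have hasc : cs.length (cs.wordProd R₀)
            < cs.length (cs.wordProd R₀ * cs.simple i) := by
          rw [← wordProd_concat' cs, hlR₀, hlR]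
          omega
        have h := hK hasc
        rwa [← wordProd_concat' cs, ← wordProd_concat' cs] at h
  refine ⟨hS, ?_⟩
  intro v hv u i hBru
  by_cases hus : cs.length (u * cs.simple i) < cs.length u
  · have h0 : Bru cs (u * cs.simple i) u := bru_of_lt cs (cs.isReflection_simple i) hus
    exact ⟨fun _ => (h0.trans' cs hBru),
      fun ha => ((h0.trans' cs hBru).trans' cs (bru_mul_simple_of_lt cs ha))⟩
  · cases hBru with
    | refl =>
      exact ⟨fun hd => bru_of_lt cs (cs.isReflection_simple i) hd, fun _ => Bru.refl _⟩
    | step t ht hl hb =>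
      have hKv₁ := (ih (cs.length (v * t)) (by omega)).2 (v * t) le_rfl u i hb
      have hv₁v : Bru cs (v * t) v := bru_of_lt cs ht hl
      constructor
      · -- descent at v
        intro hd
        by_cases h1 : cs.length ((v * t) * cs.simple i) < cs.length (v * t)
        · exact (hKv₁.1 h1).trans' cs hv₁v
        · have h1' := length_simple_lt_of_not_lt cs h1
          have h2 := hKv₁.2 h1'
          have hG : Bru cs ((v * t) * cs.simple i) v := by
            obtain ⟨T, hTred, hTprod⟩ := cs.exists_reduced_word' (v * cs.simple i)
            have hdl : cs.length (v * cs.simple i) + 1 = cs.length v :=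
              length_simple_desc cs hd
            have hRprod : cs.wordProd (T ++ [i]) = v := by
              rw [wordProd_concat' cs, ← hTprod, cs.simple_mul_simple_cancel_right]
            have hTlen : cs.length (v * cs.simple i) = T.length := by
              rw [hTprod]; exact hTred
            have hRred : cs.IsReduced (T ++ [i]) := by
              have e : cs.length (cs.wordProd (T ++ [i])) = (T ++ [i]).length := by
                rw [hRprod, List.length_append]
                simp
                omega
              exact e
            have hRn : (T ++ [i]).length ≤ n := by
              rw [List.length_append]
              simp
              omega
            obtain ⟨P, hPsub, hPred, hPprod⟩ := bru_subword cs hv₁v (T ++ [i]) hRred hRprod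
            rcases sublist_concat_cases hPsub with hP | ⟨P₀, rfl, hP₀⟩
            · have hPil : cs.IsReduced (P ++ [i]) := by
                apply isReduced_concat cs hPred
                rw [hPprod]
                exact h1'
              have h3 := hS (T ++ [i]) hRn hRred (P ++ [i])
                ((List.append_sublist_append_right [i]).mpr hP) hPil
              rwa [wordProd_concat' cs, hPprod, hRprod] at h3
            · exfalso
              have hP₀red : cs.IsReduced P₀ := isReduced_concat_left cs hPred
              have hprod₀ : cs.wordProd P₀ = (v * t) * cs.simple i := by
                have h4 : cs.wordProd (P₀ ++ [i]) * cs.simple i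
                    = (v * t) * cs.simple i := by rw [hPprod]
                rwa [wordProd_concat' cs, cs.simple_mul_simple_cancel_right] at h4
              have e1 : cs.length ((v * t) * cs.simple i) = P₀.length := by
                rw [← hprod₀]; exact hP₀red
              have e2 : cs.length (v * t) = P₀.length + 1 := by
                have h5 : cs.length (cs.wordProd (P₀ ++ [i])) = (P₀ ++ [i]).length := hPred
                rw [hPprod, List.length_append] at h5
                simpa using h5
              omega
          exact h2.trans' cs hG
      · -- ascent at v
        intro ha
        by_cases h1 : cs.length ((v * t) * cs.simple i) < cs.length (v * t)
        · exact ((hKv₁.1 h1).trans' cs hv₁v).trans' cs (bru_mul_simple_of_lt cs ha)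
        · have h1' := length_simple_lt_of_not_lt cs h1
          have h2 := hKv₁.2 h1'
          have hstep : Bru cs ((v * t) * cs.simple i) (v * cs.simple i) := by
            have ht' : cs.IsReflection (cs.simple i * t * cs.simple i) := by
              have h := ht.conj (cs.simple i)
              rwa [cs.inv_simple] at h
            have hc : (v * cs.simple i) * (cs.simple i * t * cs.simple i)
                = (v * t) * cs.simple i := by
              simp [mul_assoc, cs.simple_mul_simple_cancel_left]
            have hlen : cs.length ((v * cs.simple i) * (cs.simple i * t * cs.simple i))
                < cs.length (v * cs.simple i) := by
              rw [hc]
              have hle := length_simple_le cs (v * t) i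
              have hasc := length_simple_asc cs ha
              omega
            have h := bru_of_lt cs ht' hlen
            rwa [hc] at h
          exact h2.trans' cs hstep

/-! #### The Demazure product -/

lemma dem_nil : Dem cs ([] : List B) = 1 := rfl

lemma dem_concat (Q : List B) (i : B) :
    Dem cs (Q ++ [i]) = if cs.length (Dem cs Q) < cs.length (Dem cs Q * cs.simple i)
      then Dem cs Q * cs.simple i else Dem cs Q := by
  unfold Dem
  rw [List.foldl_append]
  rfl

lemma dem_exists (Q : List B) :
    ∃ P, P.Sublist Q ∧ cs.IsReduced P ∧ cs.wordProd P = Dem cs Q := by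
  induction Q using List.reverseRecOn with
  | nil =>
    refine ⟨[], List.Sublist.refl _, isReduced_nil cs, ?_⟩
    rw [dem_nil cs, cs.wordProd_nil]
  | append_singleton Q i ih =>
    obtain ⟨P, hsub, hred, hprod⟩ := ih
    rw [dem_concat cs]
    split_ifs with h
    · refine ⟨P ++ [i], (List.append_sublist_append_right [i]).mpr hsub, ?_, ?_⟩
      · exact isReduced_concat cs hred (by rw [hprod]; exact h)
      · rw [wordProd_concat' cs, hprod]
    · exact ⟨P, List.sublist_append_of_sublist_left hsub, hred, hprod⟩

lemma subword_bru_dem (Q : List B) :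
    ∀ P : List B, P.Sublist Q → cs.IsReduced P → Bru cs (cs.wordProd P) (Dem cs Q) := by
  induction Q using List.reverseRecOn with
  | nil =>
    intro P hsub _
    rw [List.sublist_nil.mp hsub, dem_nil cs, cs.wordProd_nil]
    exact Bru.refl _
  | append_singleton Q i ih =>
    intro P hsub hred
    rcases sublist_concat_cases hsub with hP | ⟨P₀, rfl, hP₀⟩
    · have h := ih P hP hred
      rw [dem_concat cs]
      split_ifs with hasc
      · exact h.trans' cs (bru_mul_simple_of_lt cs hasc)
      · exact h
    · have hP₀red : cs.IsReduced P₀ := isReduced_concat_left cs hred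
      have h := ih P₀ hP₀ hP₀red
      have hK := ((SK cs (cs.length (Dem cs Q))).2 (Dem cs Q) le_rfl
        (cs.wordProd P₀) i h)
      rw [dem_concat cs, wordProd_concat' cs]
      split_ifs with hasc
      · exact hK.2 hasc
      · exact hK.1 (by have := cs.length_mul_simple_ne (Dem cs Q) i; omega)

end CoxAux

/-- The Demazure product of `Q` is the maximum, in Bruhat order, of the products of the
reduced subwords of `Q`; in particular, `Q` contains a reduced word for `w` iff
`w ≤ Dem Q` in Bruhat order. -/
theorem dem_eq_max_of_reduced_subwords (Q : List B) (w : W) :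
    (∃ P : List B, P.Sublist Q ∧ cs.IsReduced P ∧ cs.wordProd P = Dem cs Q) ∧
    (∀ P : List B, P.Sublist Q → cs.IsReduced P → BruhatLe cs (cs.wordProd P) (Dem cs Q)) ∧
    ((∃ P : List B, P.Sublist Q ∧ cs.IsReduced P ∧ cs.wordProd P = w) ↔
      BruhatLe cs w (Dem cs Q)) := by
  obtain ⟨P₀, h1, h2, h3⟩ := CoxAux.dem_exists cs Q
  refine ⟨⟨P₀, h1, h2, h3⟩, ?_, ?_, ?_⟩
  · intro P hsub hred R hRred hRprod
    exact CoxAux.bru_subword cs (CoxAux.subword_bru_dem cs Q P hsub hred) R hRred hRprod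
  · rintro ⟨P, hsub, hred, hprod⟩ R hRred hRprod
    have h := CoxAux.bru_subword cs (CoxAux.subword_bru_dem cs Q P hsub hred) R hRred hRprod
    rwa [hprod] at h
  · intro hle
    obtain ⟨P, ha, hb, hc⟩ := hle P₀ h2 h3
    exact ⟨P, ha.trans h1, hb, hc⟩
end

section
/- For a reduced word Q for v and w ≤ v, the facets (maximal faces) of the subword complex Δ(Q,w) are exactly the complements of subwords of Q that are reduced words for w; consequently every facet has cardinality ℓ(v) − ℓ(w), so Δ(Q,w) is a pure simplicial complex. -/
set_option linter.unusedSectionVars false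

theorem filter_mem_map_eq {α β : Type*} [DecidableEq β] {f : α → β} :
    ∀ {l' l : List α}, l'.Sublist l → (l.map f).Nodup →
      l.filter (fun a => f a ∈ l'.map f) = l' := by
  intro l' l h
  induction h with
  | slnil => simp
  | @cons l' l a h ih =>
    intro hnd
    simp only [List.map_cons, List.nodup_cons] at hnd
    have hfa : f a ∉ l'.map f := fun hm => hnd.1 ((h.map f).subset hm)
    rw [List.filter_cons_of_neg (by simpa using hfa), ih hnd.2]
  | @cons_cons l' l a h ih =>
    intro hnd
    simp only [List.map_cons, List.nodup_cons] at hnd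
    rw [List.filter_cons_of_pos (by simp)]
    have hcong : l.filter (fun x => f x ∈ f a :: l'.map f)
        = l.filter (fun x => f x ∈ l'.map f) := by
      apply List.filter_congr
      intro x hx
      have hne : f x ≠ f a := fun he => hnd.1 (he ▸ List.mem_map_of_mem (f := f) hx)
      simp only [List.mem_cons, decide_eq_decide]
      tauto
    rw [List.map_cons] at *
    rw [hcong, ih hnd.2]

variable {B W : Type*} [DecidableEq B] [Group W] {M : CoxeterMatrix B} (cs : CoxeterSystem M W)

theorem swap_map_fst (Q : List B) :
    (Q.zipIdx.map Prod.swap).map Prod.fst = List.range Q.length := by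
  rw [List.map_map]
  have : (Prod.fst ∘ Prod.swap : B × ℕ → ℕ) = Prod.snd := rfl
  rw [this, List.zipIdx_map_snd, List.range_eq_range']

theorem dmask_anti (Q : List B) {F F' : Finset ℕ} (h : F ⊆ F') :
    (dmask Q F').Sublist (dmask Q F) := by
  apply List.Sublist.map
  apply List.monotone_filter_right
  intro p hp
  simp only [decide_eq_true_eq] at *
  exact fun hm => hp (h hm)

theorem dmask_length (Q : List B) (F : Finset ℕ) (hF : F ⊆ Finset.range Q.length) :
    (dmask Q F).length = Q.length - F.card := by
  have h1 : (dmask Q F).length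
      = ((List.range Q.length).filter (fun n => n ∉ F)).length := by
    unfold dmask
    rw [List.length_map, ← swap_map_fst Q, List.filter_map, List.length_map]
    simp only [List.filter_map, List.length_map]
    rfl
  have h2 : ((List.range Q.length).filter (fun n => n ∉ F)).length
      = ((Finset.range Q.length).filter (fun n => n ∉ F)).card := rfl
  rw [h1, h2, ← Finset.sdiff_eq_filter, Finset.card_sdiff_of_subset hF, Finset.card_range]

theorem exists_superset_dmask (Q : List B) (F : Finset ℕ)
    {P : List B} (hP : P.Sublist (dmask Q F)) :
    ∃ G : Finset ℕ, F ⊆ G ∧ G ⊆ F ∪ Finset.range Q.length ∧ dmask Q G = P := by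
  obtain ⟨E', hE', rfl⟩ := List.sublist_map_iff.mp hP
  set T : Finset ℕ := (E'.map Prod.fst).toFinset with hT
  refine ⟨F ∪ (Finset.range Q.length \ T), Finset.subset_union_left,
    Finset.union_subset_union_right (Finset.sdiff_subset), ?_⟩
  unfold dmask
  congr 1
  have hE'Q : E'.Sublist (Q.zipIdx.map Prod.swap) := hE'.trans List.filter_sublist
  have hnd : ((Q.zipIdx.map Prod.swap).map Prod.fst).Nodup := by
    rw [swap_map_fst]; exact List.nodup_range
  have key := filter_mem_map_eq (f := Prod.fst) hE'Q hnd
  rw [← key]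
  apply List.filter_congr
  intro p hp
  have hplt : p.1 ∈ Finset.range Q.length := by
    have h1 : p.1 ∈ (Q.zipIdx.map Prod.swap).map Prod.fst := List.mem_map_of_mem hp
    rw [swap_map_fst] at h1
    simpa using h1
  simp only [decide_eq_decide, Finset.mem_union, Finset.mem_sdiff, hT, List.mem_toFinset]
  constructor
  · intro hG
    push_neg at hG
    exact hG.2 hplt
  · intro hmem
    push_neg
    refine ⟨?_, fun _ => hmem⟩
    obtain ⟨q, hq, hq1⟩ := List.mem_map.mp hmem
    have hqf := hE'.subset hq
    have := List.of_mem_filter hqf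
    simp only [decide_eq_true_eq] at this
    rw [← hq1]; exact this

/-- The facets of `Δ(Q,w)` are exactly the complements of subwords of `Q` that are reduced
words for `w`; consequently every facet has cardinality `ℓ(v) - ℓ(w)`, so `Δ(Q,w)` is pure. -/
theorem subword_complex_facets (Q : List B) (v w : W)
    (hred : cs.IsReduced Q) (hv : cs.wordProd Q = v) (hw : BruhatLe cs w v) :
    (∀ F : Finset ℕ, IsFacet cs Q w F ↔
      (F ⊆ Finset.range Q.length ∧ cs.IsReduced (dmask Q F) ∧ cs.wordProd (dmask Q F) = w)) ∧
    (∀ F : Finset ℕ, IsFacet cs Q w F → F.card = cs.length v - cs.length w) := by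
  have hlv : cs.length v = Q.length := by rw [← hv]; exact hred
  have main : ∀ F : Finset ℕ, IsFacet cs Q w F ↔
      (F ⊆ Finset.range Q.length ∧ cs.IsReduced (dmask Q F) ∧ cs.wordProd (dmask Q F) = w) := by
    intro F
    constructor
    · rintro ⟨⟨hFr, P, hPsub, hPred, hPw⟩, hmax⟩
      obtain ⟨G, hFG, hGsub, hGeq⟩ := exists_superset_dmask Q F hPsub
      have hGr : G ⊆ Finset.range Q.length :=
        hGsub.trans (Finset.union_subset hFr (Finset.Subset.refl _))
      have hGface : IsFace cs Q w G :=
        ⟨hGr, P, by rw [hGeq], hPred, hPw⟩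
      have hGF : G = F := hmax G hGface hFG
      rw [hGF] at hGeq
      exact ⟨hFr, hGeq ▸ hPred, hGeq ▸ hPw⟩
    · rintro ⟨hFr, hdred, hdw⟩
      refine ⟨⟨hFr, dmask Q F, List.Sublist.refl _, hdred, hdw⟩, ?_⟩
      rintro F' ⟨hF'r, P, hPsub, hPred, hPw⟩ hFF'
      have hlw : cs.length w = P.length := by rw [← hPw]; exact hPred
      have hlw2 : cs.length w = (dmask Q F).length := by rw [← hdw]; exact hdred
      have h1 : P.length ≤ (dmask Q F').length := hPsub.length_le
      have h2 : (dmask Q F').length ≤ (dmask Q F).length := (dmask_anti Q hFF').length_le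
      have e1 := dmask_length Q F hFr
      have e2 := dmask_length Q F' hF'r
      have c1 : F.card ≤ Q.length := by
        simpa using Finset.card_le_card hFr
      have c2 : F'.card ≤ Q.length := by
        simpa using Finset.card_le_card hF'r
      have hle : F'.card ≤ F.card := by omega
      exact (Finset.eq_of_subset_of_card_le hFF' hle).symm
  refine ⟨main, ?_⟩
  intro F hF
  obtain ⟨hFr, hdred, hdw⟩ := (main F).mp hF
  have hlw : cs.length w = (dmask Q F).length := by rw [← hdw]; exact hdred
  have e1 := dmask_length Q F hFr
  have c1 : F.card ≤ Q.length := by simpa using Finset.card_le_card hFr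
  omega
end

section
/- Every ridge (codimension-1 face) of a subword complex Δ(Q,w), with Q a reduced word, is contained in at most two facets. -/
variable {B W : Type*} [DecidableEq B] [Group W] {M : CoxeterMatrix B} (cs : CoxeterSystem M W)

set_option linter.unusedSectionVars false
set_option linter.unusedVariables false

def dmaskF (Q : List B) (n : ℕ) (F : Finset ℕ) : List B :=
  (((Q.zipIdx n).map Prod.swap).filter fun p => p.1 ∉ F).map Prod.snd

theorem dmaskF_cons (a : B) (Q : List B) (n : ℕ) (F : Finset ℕ) :
    dmaskF (a :: Q) n F =
      if n ∈ F then dmaskF Q (n+1) F else a :: dmaskF Q (n+1) F := by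
  by_cases h : n ∈ F <;> simp [dmaskF, List.zipIdx_cons, h]

theorem length_dmaskF (Q : List B) (n : ℕ) (F : Finset ℕ) :
    (dmaskF Q n F).length = ((List.range' n Q.length).filter (fun i => i ∉ F)).length := by
  induction Q generalizing n with
  | nil => rfl
  | cons a Q ih =>
    rw [dmaskF_cons, List.length_cons, List.range'_succ, List.filter_cons]
    by_cases h : n ∈ F <;> simp [h, ih]

theorem dmaskF_insert_lt (Q : List B) (n x : ℕ) (F : Finset ℕ) (hx : x < n) :
    dmaskF Q n (insert x F) = dmaskF Q n F := by
  induction Q generalizing n with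
  | nil => rfl
  | cons a Q ih =>
    have hne : n ≠ x := by omega
    rw [dmaskF_cons, dmaskF_cons]
    by_cases h : n ∈ F
    · rw [if_pos (Finset.mem_insert_of_mem h), if_pos h, ih _ (by omega)]
    · rw [if_neg (by simp [h, hne]), if_neg h, ih _ (by omega)]

theorem dmaskF_insert (Q : List B) (n x : ℕ) (F : Finset ℕ) (h1 : n ≤ x)
    (h2 : x < n + Q.length) (h3 : x ∉ F) :
    dmaskF Q n (insert x F) =
      (dmaskF Q n F).eraseIdx (((List.range' n (x - n)).filter (fun i => i ∉ F)).length) := by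
  induction Q generalizing n with
  | nil => simp at h2; omega
  | cons a Q ih =>
    rw [dmaskF_cons, dmaskF_cons]
    rcases eq_or_lt_of_le h1 with rfl | hlt
    · simp only [Finset.mem_insert, true_or, if_pos, h3, if_neg, Nat.sub_self]
      rw [dmaskF_insert_lt _ _ _ _ (by omega)]
      simp
    · have hnx : n ≠ x := by omega
      have hrec := ih (n + 1) (by omega) (by simp at h2 ⊢; omega)
      have hrange : x - n = (x - (n+1)) + 1 := by omega
      rw [hrange, List.range'_succ, List.filter_cons]
      by_cases h : n ∈ F
      · rw [if_pos (Finset.mem_insert_of_mem h), if_pos h, hrec]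
        simp [h]
      · rw [if_neg (by simp [h, hnx]), if_neg h, hrec]
        simp [h]

theorem filter_range_length_lt {x N : ℕ} (F : Finset ℕ) (h1 : x < N) (h2 : x ∉ F) :
    ((List.range x).filter (fun i => i ∉ F)).length <
      ((List.range N).filter (fun i => i ∉ F)).length := by
  have : List.range N = List.range x ++ List.range' x (N - x) := by
    rw [List.range_eq_range', List.range_eq_range']
    have := List.range'_append_1 (s := 0) (m := x) (n := N - x)
    simp only [Nat.zero_add] at this
    rw [this]
    congr 1
    omega
  rw [this, List.filter_append, List.length_append]
  have hx : 0 < ((List.range' x (N - x)).filter (fun i => i ∉ F)).length := by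
    have hd : N - x = (N - x - 1) + 1 := by omega
    rw [hd, List.range'_succ, List.filter_cons]
    simp [h2]
  omega

theorem filter_range_length_eq {N : ℕ} (F : Finset ℕ) (h : F ⊆ Finset.range N) :
    ((List.range N).filter (fun i => i ∉ F)).length = N - F.card := by
  have h1 : ((List.range N).filter (fun i => i ∉ F)).length
      = ((Finset.range N).filter (fun i => i ∉ F)).card := rfl
  rw [h1, ← Finset.sdiff_eq_filter, Finset.card_sdiff_of_subset h, Finset.card_range]

theorem ris_eraseIdx (P : List B) (i m : ℕ) (him : i < m) :
    (cs.rightInvSeq (P.eraseIdx i)).getD (m - 1) 1 = (cs.rightInvSeq P).getD m 1 := by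
  induction P generalizing i m with
  | nil => simp [CoxeterSystem.rightInvSeq]
  | cons b l ih =>
    cases i with
    | zero =>
      obtain ⟨m', rfl⟩ : ∃ m', m = m' + 1 := ⟨m - 1, by omega⟩
      show (cs.rightInvSeq l).getD m' 1 = ((_ :: cs.rightInvSeq l).getD (m' + 1) 1)
      rw [List.getD_cons_succ]
    | succ i' =>
      obtain ⟨m', rfl⟩ : ∃ m', m = m' + 1 := ⟨m - 1, by omega⟩
      have hm' : 1 ≤ m' := by omega
      show ((_ :: cs.rightInvSeq (l.eraseIdx i')).getD m' 1)
          = ((_ :: cs.rightInvSeq l).getD (m' + 1) 1)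
      obtain ⟨m'', rfl⟩ : ∃ m'', m' = m'' + 1 := ⟨m' - 1, by omega⟩
      rw [List.getD_cons_succ, List.getD_cons_succ]
      have := ih i' (m'' + 1) (by omega)
      simpa using this

theorem key_lemma (P : List B) (w : W) (m₁ m₂ m₃ : ℕ) (h12 : m₁ < m₂) (h23 : m₂ < m₃)
    (h3 : m₃ < P.length) (red1 : cs.IsReduced (P.eraseIdx m₁))
    (e1 : cs.wordProd (P.eraseIdx m₁) = w) (e2 : cs.wordProd (P.eraseIdx m₂) = w)
    (e3 : cs.wordProd (P.eraseIdx m₃) = w) : False := by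
  have hr2 : cs.wordProd P * (cs.rightInvSeq P).getD m₂ 1 = w := by
    rw [cs.wordProd_mul_getD_rightInvSeq, e2]
  have hr3 : cs.wordProd P * (cs.rightInvSeq P).getD m₃ 1 = w := by
    rw [cs.wordProd_mul_getD_rightInvSeq, e3]
  have heq : (cs.rightInvSeq P).getD m₂ 1 = (cs.rightInvSeq P).getD m₃ 1 :=
    mul_left_cancel (hr2.trans hr3.symm)
  have h2' := ris_eraseIdx cs P m₁ m₂ h12
  have h3' := ris_eraseIdx cs P m₁ m₃ (h12.trans h23)
  have hlen : (cs.rightInvSeq (P.eraseIdx m₁)).length = P.length - 1 := by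
    rw [cs.length_rightInvSeq, List.length_eraseIdx_of_lt (by omega)]
  have hm2 : m₂ - 1 < (cs.rightInvSeq (P.eraseIdx m₁)).length := by omega
  have hm3 : m₃ - 1 < (cs.rightInvSeq (P.eraseIdx m₁)).length := by omega
  have hnd := red1.nodup_rightInvSeq
  have : m₂ - 1 = m₃ - 1 := by
    rw [← hnd.getElem_inj_iff (hi := hm2) (hj := hm3)]
    rw [← List.getD_eq_getElem _ 1 hm2, ← List.getD_eq_getElem _ 1 hm3, h2', h3', heq]
  omega

theorem key_lemma' (P : List B) (w : W) (m₁ m₂ m₃ : ℕ) (h12 : m₁ ≠ m₂) (h13 : m₁ ≠ m₃)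
    (h23 : m₂ ≠ m₃) (hl1 : m₁ < P.length) (hl2 : m₂ < P.length) (hl3 : m₃ < P.length)
    (red1 : cs.IsReduced (P.eraseIdx m₁)) (red2 : cs.IsReduced (P.eraseIdx m₂))
    (red3 : cs.IsReduced (P.eraseIdx m₃))
    (e1 : cs.wordProd (P.eraseIdx m₁) = w) (e2 : cs.wordProd (P.eraseIdx m₂) = w)
    (e3 : cs.wordProd (P.eraseIdx m₃) = w) : False := by
  rcases Nat.lt_trichotomy m₁ m₂ with a | a | a
  · rcases Nat.lt_trichotomy m₂ m₃ with b | b | b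
    · exact key_lemma cs P w m₁ m₂ m₃ a b hl3 red1 e1 e2 e3
    · exact h23 b
    · rcases Nat.lt_trichotomy m₁ m₃ with c | c | c
      · exact key_lemma cs P w m₁ m₃ m₂ c b hl2 red1 e1 e3 e2
      · exact h13 c
      · exact key_lemma cs P w m₃ m₁ m₂ c a hl2 red3 e3 e1 e2
  · exact h12 a
  · rcases Nat.lt_trichotomy m₁ m₃ with b | b | b
    · exact key_lemma cs P w m₂ m₁ m₃ a b hl3 red2 e2 e1 e3
    · exact h13 b
    · rcases Nat.lt_trichotomy m₂ m₃ with c | c | c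
      · exact key_lemma cs P w m₂ m₃ m₁ c b hl1 red2 e2 e3 e1
      · exact h23 c
      · exact key_lemma cs P w m₃ m₂ m₁ c a hl1 red3 e3 e2 e1

theorem dmask_eq_dmaskF (Q : List B) (F : Finset ℕ) : dmask Q F = dmaskF Q 0 F := rfl

theorem length_dmask' (Q : List B) (F : Finset ℕ) :
    (dmask Q F).length = ((List.range Q.length).filter (fun i => i ∉ F)).length := by
  rw [dmask_eq_dmaskF, length_dmaskF, List.range_eq_range']

theorem length_dmask (Q : List B) (F : Finset ℕ) (h : F ⊆ Finset.range Q.length) :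
    (dmask Q F).length = Q.length - F.card := by
  rw [length_dmask', filter_range_length_eq F h]

theorem dmask_insert (Q : List B) (x : ℕ) (F : Finset ℕ) (h1 : x < Q.length) (h3 : x ∉ F) :
    dmask Q (insert x F) =
      (dmask Q F).eraseIdx (((List.range x).filter (fun i => i ∉ F)).length) := by
  rw [dmask_eq_dmaskF, dmask_eq_dmaskF, dmaskF_insert Q 0 x F (by omega) (by omega) h3,
    List.range_eq_range', Nat.sub_zero]

/-- Every ridge (codimension-1 face) of the subword complex `Δ(Q,w)` is contained in at most
two facets. -/
theorem ridge_in_at_most_two_facets (Q : List B) (v w : W)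
    (hred : cs.IsReduced Q) (hv : cs.wordProd Q = v) (hw : BruhatLe cs w v)
    (R : Finset ℕ) (hR : IsFace cs Q w R)
    (hcard : R.card + 1 = cs.length v - cs.length w)
    (hridge : ∃ F : Finset ℕ, IsFacet cs Q w F ∧ R ⊆ F) :
    ∀ F₁ F₂ F₃ : Finset ℕ, IsFacet cs Q w F₁ → IsFacet cs Q w F₂ → IsFacet cs Q w F₃ →
      R ⊆ F₁ → R ⊆ F₂ → R ⊆ F₃ → F₁ = F₂ ∨ F₁ = F₃ ∨ F₂ = F₃ := by
  intro F₁ F₂ F₃ hf₁ hf₂ hf₃ hr₁ hr₂ hr₃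
  have hNv : Q.length = cs.length v := by
    rw [← hv]; exact hred.symm
  have hwv : cs.length w ≤ cs.length v := by
    obtain ⟨P, hPs, hPr, hPw⟩ := hw Q hred hv
    calc cs.length w = P.length := by rw [← hPw]; exact hPr
    _ ≤ Q.length := hPs.length_le
    _ = cs.length v := hNv
  have hlvw : cs.length w < cs.length v := by omega
  have hRcard : R.card = cs.length v - cs.length w - 1 := by omega
  have hPlen : (dmask Q R).length = cs.length w + 1 := by
    have hc : R.card ≤ Q.length := by
      simpa using Finset.card_le_card hR.1
    rw [length_dmask Q R hR.1]; omega
  -- Each facet containing R is either R itself or R plus one extra position,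
  -- and in the latter case its complement is a reduced word for w.
  have step : ∀ F : Finset ℕ, IsFacet cs Q w F → R ⊆ F →
      F = R ∨ ∃ x, x < Q.length ∧ x ∉ R ∧ F = insert x R ∧
        cs.IsReduced (dmask Q F) ∧ cs.wordProd (dmask Q F) = w := by
    intro F hF hRF
    obtain ⟨⟨hFr, P', hP's, hP'red, hP'w⟩, hmax⟩ := hF
    have hFc : F.card ≤ Q.length := by simpa using Finset.card_le_card hFr
    have hlenF : (dmask Q F).length = Q.length - F.card := length_dmask Q F hFr
    have hP'len : cs.length w = P'.length := by rw [← hP'w]; exact hP'red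
    have h1 : P'.length ≤ (dmask Q F).length := hP's.length_le
    have hcards : R.card ≤ F.card := Finset.card_le_card hRF
    have hFcard : F.card ≤ R.card + 1 := by omega
    rcases Nat.lt_or_ge R.card F.card with hlt | hge
    · right
      have hsd : (F \ R).card = 1 := by
        rw [Finset.card_sdiff_of_subset hRF]; omega
      obtain ⟨x, hxe⟩ := Finset.card_eq_one.mp hsd
      have hxF : x ∈ F \ R := by rw [hxe]; exact Finset.mem_singleton_self x
      have hxR : x ∉ R := (Finset.mem_sdiff.mp hxF).2
      have hxQ : x < Q.length := by
        have := hFr (Finset.mem_sdiff.mp hxF).1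
        simpa using this
      have hFx : F = insert x R := by
        have : R ∪ (F \ R) = F := Finset.union_sdiff_of_subset hRF
        rw [← this, hxe, Finset.union_comm, ← Finset.insert_eq]
      have hlen2 : (dmask Q F).length = cs.length w := by omega
      have hPe : P' = dmask Q F := hP's.eq_of_length (by omega)
      exact ⟨x, hxQ, hxR, hFx, by rw [← hPe]; exact hP'red, by rw [← hPe]; exact hP'w⟩
    · left
      exact (Finset.eq_of_subset_of_card_le hRF hge).symm
  rcases step F₁ hf₁ hr₁ with h₁ | ⟨x₁, hx₁Q, hx₁R, hFx₁, hred₁, hw₁⟩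
  · left; rw [← hf₁.2 F₂ hf₂.1 (h₁ ▸ hr₂)]
  rcases step F₂ hf₂ hr₂ with h₂ | ⟨x₂, hx₂Q, hx₂R, hFx₂, hred₂, hw₂⟩
  · left; rw [hf₂.2 F₁ hf₁.1 (h₂ ▸ hr₁)]
  rcases step F₃ hf₃ hr₃ with h₃ | ⟨x₃, hx₃Q, hx₃R, hFx₃, hred₃, hw₃⟩
  · right; left; rw [hf₃.2 F₁ hf₁.1 (h₃ ▸ hr₁)]
  by_cases e12 : x₁ = x₂
  · left; rw [hFx₁, hFx₂, e12]
  by_cases e13 : x₁ = x₃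
  · right; left; rw [hFx₁, hFx₃, e13]
  by_cases e23 : x₂ = x₃
  · right; right; rw [hFx₂, hFx₃, e23]
  exfalso
  set P : List B := dmask Q R with hP
  have hm : ∀ y : ℕ, y < Q.length → y ∉ R →
      ((List.range y).filter (fun i => i ∉ R)).length < P.length := by
    intro y hyQ hyR
    rw [hP, length_dmask']
    exact filter_range_length_lt R hyQ hyR
  have hmono : ∀ y z : ℕ, y ∉ R → y ≠ z → z ∉ R → y < Q.length → z < Q.length →
      ((List.range y).filter (fun i => i ∉ R)).length ≠
      ((List.range z).filter (fun i => i ∉ R)).length := by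
    intro y z hyR hyz hzR _ _
    rcases Nat.lt_or_ge y z with h | h
    · exact Nat.ne_of_lt (filter_range_length_lt R h hyR)
    · exact (Nat.ne_of_lt (filter_range_length_lt R (by omega) hzR)).symm
  have hdm : ∀ x : ℕ, x < Q.length → x ∉ R →
      dmask Q (insert x R) = P.eraseIdx (((List.range x).filter (fun i => i ∉ R)).length) :=
    fun x h1 h3 => dmask_insert Q x R h1 h3
  have hd₁ := hdm x₁ hx₁Q hx₁R
  have hd₂ := hdm x₂ hx₂Q hx₂R
  have hd₃ := hdm x₃ hx₃Q hx₃R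
  rw [← hFx₁] at hd₁; rw [← hFx₂] at hd₂; rw [← hFx₃] at hd₃
  exact key_lemma' cs P w _ _ _
    (hmono x₁ x₂ hx₁R e12 hx₂R hx₁Q hx₂Q)
    (hmono x₁ x₃ hx₁R e13 hx₃R hx₁Q hx₃Q)
    (hmono x₂ x₃ hx₂R e23 hx₃R hx₂Q hx₃Q)
    (hm x₁ hx₁Q hx₁R) (hm x₂ hx₂Q hx₂R) (hm x₃ hx₃Q hx₃R)
    (hd₁ ▸ hred₁) (hd₂ ▸ hred₂) (hd₃ ▸ hred₃)
    (hd₁ ▸ hw₁) (hd₂ ▸ hw₂) (hd₃ ▸ hw₃)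
end
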